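/- Let F : C ⥤ Cat and let ∫F be its Grothendieck construction. For any category X, functors ∫F ⥤ X correspond naturally (by an isomorphism of categories) to lax cocones under F with vertex X: families of functors α_c : F(c) ⥤ X together with natural transformations θ_f : α_c ⟶ α_{c'} ∘ F(f) for each f : c → c', satisfying unitality (θ_{id} = id) and the cocycle/composability condition θ_{g∘f} = (θ_g ∗ F(f)) ∘ θ_f. -/

import Mathlib

open CategoryTheory

universe v u v₂ u₂

variable {C : Type u} [Category.{v} C]

/-- A lax cocone under `F : C ⥤ Cat` with vertex `X`: functors `α_c : F c ⥤ X` together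
with natural transformations `θ_f : α_c ⟶ F f ⋙ α_c'` satisfying unitality and the
cocycle condition. -/
structure LaxCocone (F : C ⥤ Cat.{v₂, u₂}) (X : Type u₂) [Category.{v₂} X] where
  fib : ∀ c : C, F.obj c ⥤ X
  hom : ∀ {c c' : C} (f : c ⟶ c'), fib c ⟶ (F.map f).toFunctor ⋙ fib c'
  hom_id : ∀ c : C, hom (𝟙 c) =
    eqToHom (show fib c = (F.map (𝟙 c)).toFunctor ⋙ fib c by rw [CategoryTheory.Functor.map_id]; rfl)
  hom_comp : ∀ (c₁ c₂ c₃ : C) (f : c₁ ⟶ c₂) (g : c₂ ⟶ c₃), hom (f ≫ g) =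
    hom f ≫ Functor.whiskerLeft (F.map f).toFunctor (hom g) ≫
      eqToHom (show (F.map f).toFunctor ⋙ ((F.map g).toFunctor ⋙ fib c₃) = (F.map (f ≫ g)).toFunctor ⋙ fib c₃ by
        rw [CategoryTheory.Functor.map_comp]; rfl)

/-- The functor `∫F ⥤ X` associated to a lax cocone under `F` with vertex `X`. -/
def LaxCocone.toFunctor {F : C ⥤ Cat.{v₂, u₂}} {X : Type u₂} [Category.{v₂} X]
    (L : LaxCocone F X) : Grothendieck F ⥤ X :=
  Grothendieck.functorFrom L.fib L.hom L.hom_id L.hom_comp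


section Aux

variable {F : C ⥤ Cat.{v₂, u₂}} {X : Type u₂} [Category.{v₂} X]
variable {E : Type*} [Category E]
variable (fib : ∀ c, F.obj c ⥤ E)
  (hom : ∀ {c c' : C} (f : c ⟶ c'), fib c ⟶ (F.map f).toFunctor ⋙ fib c')
  (hom_id : ∀ c, hom (𝟙 c) = eqToHom (show fib c = (F.map (𝟙 c)).toFunctor ⋙ fib c by rw [CategoryTheory.Functor.map_id]; rfl))
  (hom_comp : ∀ c₁ c₂ c₃ (f : c₁ ⟶ c₂) (g : c₂ ⟶ c₃), hom (f ≫ g) =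
    hom f ≫ Functor.whiskerLeft (F.map f).toFunctor (hom g) ≫ eqToHom (show (F.map f).toFunctor ⋙ ((F.map g).toFunctor ⋙ fib c₃) = (F.map (f ≫ g)).toFunctor ⋙ fib c₃ by rw [CategoryTheory.Functor.map_comp]; rfl))

lemma aux_ι_comp_functorFrom (c : C) :
    Grothendieck.ι F c ⋙ Grothendieck.functorFrom fib hom hom_id hom_comp = fib c := by
  exact Functor.ext_of_iso (Grothendieck.ιCompFunctorFrom fib hom hom_id hom_comp c) (fun _ => rfl) (fun _ => rfl)

lemma aux_eqToHom_comp_id {D : Type*} [Category D] {a b₁ b₂ c₁ : D} (p : a = b₂) (q : a = b₁)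
    (r : b₁ = c₁) (s : c₁ = b₂) : eqToHom p ≫ 𝟙 b₂ = eqToHom q ≫ eqToHom r ≫ eqToHom s := by
  subst q r s
  simp

theorem grothendieck_functors_equiv_laxCocones
    (F : C ⥤ Cat.{v₂, u₂}) (X : Type u₂) [Category.{v₂} X] :
    Function.Bijective
      (LaxCocone.toFunctor : LaxCocone F X → (Grothendieck F ⥤ X)) := by
  constructor
  · rintro ⟨fib₁, hom₁, hid₁, hc₁⟩ ⟨fib₂, hom₂, hid₂, hc₂⟩ h
    have hfib : fib₁ = fib₂ := by
      funext c
      have h' := congrArg (fun T : Grothendieck F ⥤ X => Grothendieck.ι F c ⋙ T) h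
      rwa [show ({ fib := fib₁, hom := hom₁, hom_id := hid₁, hom_comp := hc₁ } :
          LaxCocone F X).toFunctor = Grothendieck.functorFrom fib₁ hom₁ hid₁ hc₁ from rfl,
        show ({ fib := fib₂, hom := hom₂, hom_id := hid₂, hom_comp := hc₂ } :
          LaxCocone F X).toFunctor = Grothendieck.functorFrom fib₂ hom₂ hid₂ hc₂ from rfl,
        aux_ι_comp_functorFrom fib₁ hom₁ hid₁ hc₁ c,
        aux_ι_comp_functorFrom fib₂ hom₂ hid₂ hc₂ c] at h'
    subst hfib
    have hhom : @hom₁ = @hom₂ := by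
      funext c c' f
      ext d
      have := Functor.congr_hom h
        (⟨f, 𝟙 _⟩ : (⟨c, d⟩ : Grothendieck F) ⟶ ⟨c', (F.map f).toFunctor.obj d⟩)
      simp [LaxCocone.toFunctor] at this
      rw [this]; erw [eqToHom_refl, eqToHom_refl, Category.id_comp, Category.comp_id]
    cases hhom
    rfl
  · intro G
    have key : ∀ {c c' : C} (f : c ⟶ c') (d : F.obj c),
        ((⟨f, 𝟙 _⟩ : (⟨c, d⟩ : Grothendieck F) ⟶ ⟨c', (F.map f).toFunctor.obj d⟩)) =
          (Grothendieck.ιNatTrans f).app d := fun f d => rfl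
    refine ⟨⟨fun c => Grothendieck.ι F c ⋙ G,
      fun {c c'} f => Functor.whiskerRight (Grothendieck.ιNatTrans f) G, ?_, ?_⟩, ?_⟩
    · intro c
      ext d
      have : (Grothendieck.ιNatTrans (𝟙 c)).app d =
          eqToHom (show (⟨c, d⟩ : Grothendieck F) = ⟨c, (F.map (𝟙 c)).toFunctor.obj d⟩ by
            simp) := by
        rw [Grothendieck.eqToHom_eq]
        exact Grothendieck.ext _ _ rfl (Category.comp_id _)
      simp [this, eqToHom_app]
      exact eqToHom_map G _
    · intro c₁ c₂ c₃ f g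
      ext d
      have : (Grothendieck.ιNatTrans (f ≫ g)).app d =
          (Grothendieck.ιNatTrans f).app d ≫ (Grothendieck.ιNatTrans g).app ((F.map f).toFunctor.obj d) ≫
            eqToHom (show ((F.map g).toFunctor ⋙ Grothendieck.ι F c₃).obj ((F.map f).toFunctor.obj d) =
              ⟨c₃, (F.map (f ≫ g)).toFunctor.obj d⟩ by simp) := by
        rw [Grothendieck.eqToHom_eq]
        apply Grothendieck.ext
        · dsimp only [Grothendieck.ι_obj, Grothendieck.ι_map, Grothendieck.ιNatTrans_app_base, Grothendieck.ιNatTrans_app_fiber, Grothendieck.comp_fiber, Grothendieck.comp_base, Functor.comp_obj]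
          erw [CategoryTheory.Functor.map_id (F.map _).toFunctor, CategoryTheory.Functor.map_id (F.map _).toFunctor]
          erw [Category.id_comp, Category.id_comp]
          exact aux_eqToHom_comp_id _ _ _ _
        · exact (congrArg (f ≫ ·) (Category.comp_id g)).symm
      simp [this, eqToHom_app]
      exact (G.map_comp _ _).trans (congrArg (G.map _ ≫ ·) ((G.map_comp _ _).trans (congrArg (G.map _ ≫ ·) (eqToHom_map G _))))
    · refine CategoryTheory.Functor.ext (fun x => rfl) (fun x y f => ?_)
      have : (Grothendieck.ιNatTrans f.base).app x.fiber ≫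
          (Grothendieck.ι F y.base).map f.fiber = f := by
        exact Grothendieck.ext _ _ (Category.comp_id _) (by dsimp only [Grothendieck.ι_obj, Grothendieck.ι_map, Grothendieck.ιNatTrans_app_base, Grothendieck.ιNatTrans_app_fiber, Grothendieck.comp_fiber, Grothendieck.comp_base, Functor.comp_obj]; erw [CategoryTheory.Functor.map_id (F.map _).toFunctor]; erw [Category.id_comp, eqToHom_trans_assoc, eqToHom_trans_assoc]; exact Category.id_comp _)
      conv_rhs => rw [← this]
      simp [LaxCocone.toFunctor]
      exact ((G.map_comp _ _).symm.trans (Category.comp_id _).symm).trans (Category.id_comp _).symm
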